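/- Power of the Cayley identity (the square case m = n of the Bernstein–Sato polynomial of powers of the ideal of maximal minors): for all positive integers n, d and every natural number s, det(∂X)^{d}·(det X)^{d(s+1)} = (∏_{i=1}^{n} ∏_{j=0}^{d-1} (d·s + i + j))·(det X)^{d·s} in ℚ[x_{ij}]. -/

import Mathlib

open MvPolynomial

/-- The partial-derivative operator `∂_{ij}` as a linear endomorphism of
`ℚ[x_{ij} : 1 ≤ i,j ≤ n]`. -/
noncomputable def pd1 {n : ℕ} (v : Fin n × Fin n) :
    Module.End ℚ (MvPolynomial (Fin n × Fin n) ℚ) :=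
  (pderiv v).toLinearMap

/-- The operator `det(∂X) = Σ_{σ ∈ S_n} sgn(σ) ∏_i ∂_{i,σ(i)}` (the operators
`∂_{i,σ(i)}` pairwise commute, so the order of composition is immaterial). -/
noncomputable def detOp1 (n : ℕ) : Module.End ℚ (MvPolynomial (Fin n × Fin n) ℚ) :=
  ∑ σ : Equiv.Perm (Fin n),
    (Equiv.Perm.sign σ : ℤ) • (List.ofFn fun i => pd1 (i, σ i)).prod

/-- The generic `n × n` matrix `X = (x_{ij})` over `ℚ[x_{ij}]`. -/
noncomputable def Xmat1 (n : ℕ) :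
    Matrix (Fin n) (Fin n) (MvPolynomial (Fin n × Fin n) ℚ) :=
  fun i j => X (i, j)

namespace CayleyPow

open Matrix Finset Equiv

abbrev Rn (n : ℕ) := MvPolynomial (Fin n × Fin n) ℚ

variable {n : ℕ}

lemma pderiv_pderiv (u v : Fin n × Fin n) (p : Rn n) :
    pderiv u (pderiv v p) = pderiv v (pderiv u p) := by
  induction p using MvPolynomial.induction_on with
  | C a => simp
  | add p q hp hq => simp only [map_add, hp, hq]
  | mul_X p i hp =>
    have h1 : ∀ w : Fin n × Fin n, pderiv w (X i : Rn n) = C (if i = w then 1 else 0) := by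
      intro w; by_cases h : i = w <;> simp [h]
    simp only [pderiv_mul, map_add, h1, pderiv_C, mul_zero, add_zero, hp]
    ring

lemma pderiv_finset_prod {ι : Type*} [DecidableEq ι] (v : Fin n × Fin n) (s : Finset ι)
    (g : ι → Rn n) :
    pderiv v (∏ i ∈ s, g i) = ∑ i ∈ s, pderiv v (g i) * ∏ j ∈ s.erase i, g j := by
  induction s using Finset.induction_on with
  | empty => simp
  | @insert a s ha ih =>
    rw [Finset.prod_insert ha, pderiv_mul, ih, Finset.sum_insert ha, Finset.erase_insert ha,
      Finset.mul_sum]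
    congr 1
    refine Finset.sum_congr rfl fun i hi => ?_
    have hai : a ≠ i := fun h => ha (h ▸ hi)
    rw [Finset.erase_insert_of_ne hai,
      Finset.prod_insert (fun h => ha (Finset.mem_of_mem_erase h))]
    ring

lemma det_Xmat_ne_zero : (Xmat1 n).det ≠ 0 := by
  intro h
  have h0 := congrArg (MvPolynomial.eval (fun v : Fin n × Fin n => if v.1 = v.2 then (1 : ℚ) else 0)) h
  rw [RingHom.map_det] at h0
  have h2 : (MvPolynomial.eval (fun v : Fin n × Fin n => if v.1 = v.2 then (1 : ℚ) else 0)).mapMatrix (Xmat1 n) = 1 := by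
    ext i j
    simp [Xmat1, Matrix.one_apply]
  rw [h2] at h0
  simp at h0


lemma pderiv_det (M : Matrix (Fin n) (Fin n) (Rn n)) (a c : Fin n)
    (hrow : ∀ j, M a j = X (a, j))
    (hoth : ∀ i j, i ≠ a → pderiv (a, c) (M i j) = 0) :
    pderiv (a, c) M.det = (M.updateRow a (Pi.single c 1)).det := by
  rw [Matrix.det_apply, Matrix.det_apply, map_sum]
  refine Finset.sum_congr rfl fun σ _ => ?_
  rw [Units.smul_def, Units.smul_def, map_zsmul]
  congr 1
  rw [pderiv_finset_prod]
  rw [Finset.sum_eq_single (σ⁻¹ a)]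
  · have hσ : σ (σ⁻¹ a) = a := Equiv.apply_symm_apply σ a
    rw [← Finset.mul_prod_erase Finset.univ _ (Finset.mem_univ (σ⁻¹ a))]
    congr 1
    · rw [hσ, hrow, Matrix.updateRow_self]
      by_cases hc : σ⁻¹ a = c
      · subst hc
        simp
      · rw [Pi.single_eq_of_ne hc]
        have : (a, σ⁻¹ a) ≠ (a, c) := fun h => hc (congrArg Prod.snd h)
        rw [pderiv_X, Pi.single_eq_of_ne this]
    · refine Finset.prod_congr rfl fun j hj => ?_
      have hja : σ j ≠ a := by
        intro h
        exact (Finset.mem_erase.mp hj).1 (by rw [← h, Equiv.Perm.inv_def, Equiv.symm_apply_apply])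
      rw [Matrix.updateRow_ne hja]
  · intro i _ hi
    have : σ i ≠ a := fun h => hi (by rw [← h, Equiv.Perm.inv_def, Equiv.symm_apply_apply])
    rw [hoth _ _ this, zero_mul]
  · intro h
    exact absurd (Finset.mem_univ _) h


noncomputable def Ymat (n k : ℕ) (t : Equiv.Perm (Fin n)) :
    Matrix (Fin n) (Fin n) (Rn n) :=
  fun i j => if (i : ℕ) < k then (if j = t i then 1 else 0) else X (i, j)

lemma Ymat_zero (t : Equiv.Perm (Fin n)) : Ymat n 0 t = Xmat1 n := by
  ext i j; simp [Ymat, Xmat1]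

lemma Ymat_univ_one : Ymat n n (1 : Equiv.Perm (Fin n)) = 1 := by
  ext i j
  simp [Ymat, i.isLt, Matrix.one_apply, eq_comm]

lemma Ymat_swap (k : ℕ) (t : Equiv.Perm (Fin n)) (a b : Fin n)
    (hak : (a : ℕ) < k) (hbk : (b : ℕ) < k) :
    Ymat n k (t * Equiv.swap a b) = (Ymat n k t).submatrix (Equiv.swap a b) id := by
  ext i j : 1
  rcases lt_or_ge (i : ℕ) k with hik | hik
  · have hsw : ((Equiv.swap a b i : Fin n) : ℕ) < k := by
      rcases Equiv.swap_apply_def a b i with _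
      by_cases h1 : i = a
      · simp [h1, Equiv.swap_apply_left, hbk]
      · by_cases h2 : i = b
        · simp [h2, Equiv.swap_apply_right, hak]
        · rw [Equiv.swap_apply_of_ne_of_ne h1 h2]; exact hik
    simp only [Ymat, Matrix.submatrix_apply, id_eq, hik, if_true, hsw, Equiv.Perm.mul_apply]
    exact if_congr Iff.rfl rfl rfl
  · have hia : i ≠ a := fun h => absurd hak (by rw [← h]; omega)
    have hib : i ≠ b := fun h => absurd hbk (by rw [← h]; omega)
    have hsw : Equiv.swap a b i = i := Equiv.swap_apply_of_ne_of_ne hia hib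
    simp only [Ymat, Matrix.submatrix_apply, id_eq, hsw, Equiv.Perm.mul_apply]

lemma Ymat_update (k : ℕ) (hk : k < n) (t : Equiv.Perm (Fin n)) :
    (Ymat n k t).updateRow ⟨k, hk⟩ (Pi.single (t ⟨k, hk⟩) 1) = Ymat n (k + 1) t := by
  ext i j
  by_cases hia : i = (⟨k, hk⟩ : Fin n)
  · subst hia
    rw [Matrix.updateRow_self]
    simp [Ymat, Pi.single_apply]
  · rw [Matrix.updateRow_ne hia]
    have hik : (i : ℕ) ≠ k := fun h => hia (Fin.ext h)
    by_cases h : (i : ℕ) < k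
    · simp [Ymat, h, Nat.lt_succ_of_lt h]
    · have : ¬ (i : ℕ) < k + 1 := by omega
      simp [Ymat, h, this]

noncomputable def Amat (n k : ℕ) (hk : k ≤ n) (t : Equiv.Perm (Fin n)) :
    Matrix (Fin k) (Fin k) (Rn n) :=
  fun i j => adjugate (Xmat1 n) (t (Fin.castLE hk i)) (Fin.castLE hk j)

lemma Jlem (k : ℕ) (hk : k ≤ n) (hk1 : 1 ≤ k) (t : Equiv.Perm (Fin n)) :
    (Amat n k hk t).det = (Xmat1 n).det ^ (k - 1) * (Ymat n k t).det := by
  have hnk : k + (n - k) = n := by omega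
  let e : Fin k ⊕ Fin (n - k) ≃ Fin n := finSumFinEquiv.trans (finCongr hnk)
  have he1 : ∀ i : Fin k, ((e (Sum.inl i) : Fin n) : ℕ) = (i : ℕ) := by
    intro i; simp [e, finCongr_apply]
  have he2 : ∀ i : Fin (n - k), ((e (Sum.inr i) : Fin n) : ℕ) = k + (i : ℕ) := by
    intro i; simp [e, finCongr_apply]
  set Z : Matrix (Fin n) (Fin n) (Rn n) := Ymat n k t * adjugate (Xmat1 n) with hZ
  have hrow1 : ∀ (r : Fin n), (r : ℕ) < k → ∀ c, Z r c = adjugate (Xmat1 n) (t r) c := by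
    intro r hr c
    rw [hZ, Matrix.mul_apply]
    rw [Finset.sum_eq_single (t r)]
    · simp [Ymat, hr]
    · intro l _ hl
      simp [Ymat, hr, hl]
    · intro h; exact absurd (Finset.mem_univ _) h
  have hrow2 : ∀ (r : Fin n), ¬ ((r : ℕ) < k) → ∀ c,
      Z r c = (Xmat1 n).det * (if r = c then 1 else 0) := by
    intro r hr c
    rw [hZ, Matrix.mul_apply]
    have : ∀ l, Ymat n k t r l = Xmat1 n r l := by intro l; simp [Ymat, hr, Xmat1]
    simp_rw [this]
    have := congrFun (congrFun (Matrix.mul_adjugate (Xmat1 n)) r) c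
    rw [Matrix.mul_apply] at this
    rw [this]
    simp [Matrix.one_apply]
  have hblock : Z.submatrix e e =
      Matrix.fromBlocks (Amat n k hk t) (Z.submatrix (fun i => e (Sum.inl i)) (fun j => e (Sum.inr j)))
        0 ((Xmat1 n).det • 1) := by
    ext i j : 1
    rcases i with i | i <;> rcases j with j | j
    · simp only [Matrix.submatrix_apply, Matrix.fromBlocks_apply₁₁]
      rw [hrow1 _ (by rw [he1]; exact i.isLt)]
      have : e (Sum.inl i) = Fin.castLE hk i := Fin.ext (by rw [he1]; rfl)
      rw [this]
      have : e (Sum.inl j) = Fin.castLE hk j := Fin.ext (by rw [he1]; rfl)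
      rw [this]
      rfl
    · simp only [Matrix.submatrix_apply, Matrix.fromBlocks_apply₁₂]
    · simp only [Matrix.submatrix_apply, Matrix.fromBlocks_apply₂₁, Matrix.zero_apply]
      rw [hrow2 _ (by rw [he2]; omega)]
      have : e (Sum.inr i) ≠ e (Sum.inl j) := by
        intro h
        have := congrArg Fin.val h
        rw [he1, he2] at this
        have hj := j.isLt
        omega
      simp [this]
    · simp only [Matrix.submatrix_apply, Matrix.fromBlocks_apply₂₂]
      rw [hrow2 _ (by rw [he2]; omega)]
      have : (e (Sum.inr i) = e (Sum.inr j)) ↔ i = j := by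
        constructor
        · intro h
          have := congrArg Fin.val h
          rw [he2, he2] at this
          exact Fin.ext (by omega)
        · intro h; rw [h]
      simp only [Matrix.smul_apply, Matrix.one_apply, smul_eq_mul]
      by_cases h : i = j
      · simp [h, this]
      · have : ¬ (e (Sum.inr i) = e (Sum.inr j)) := fun hh => h (this.mp hh)
        simp [h, this]
  have hdet1 : Z.det = (Ymat n k t).det * (Xmat1 n).det ^ (n - 1) := by
    rw [hZ, Matrix.det_mul, Matrix.det_adjugate, Fintype.card_fin]
  have hdet2 : Z.det = (Amat n k hk t).det * (Xmat1 n).det ^ (n - k) := by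
    rw [← Matrix.det_submatrix_equiv_self e Z, hblock, Matrix.det_fromBlocks_zero₂₁,
      Matrix.det_smul, Matrix.det_one, Fintype.card_fin, mul_one]
  have hpow : (Xmat1 n).det ^ (n - 1) = (Xmat1 n).det ^ (k - 1) * (Xmat1 n).det ^ (n - k) := by
    rw [← pow_add]; congr 1; omega
  have h0 := hdet2.symm.trans hdet1
  have h2 : (Amat n k hk t).det * (Xmat1 n).det ^ (n - k) =
      ((Xmat1 n).det ^ (k - 1) * (Ymat n k t).det) * (Xmat1 n).det ^ (n - k) := by
    rw [h0, hpow]; ring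
  exact mul_right_cancel₀ (pow_ne_zero _ det_Xmat_ne_zero) h2


section LEM

variable {S : Type*} [CommRing S]

lemma det_updateColumn_sum' {k : ℕ} (M : Matrix (Fin k) (Fin k) S) (j : Fin k)
    {ι : Type*} (s : Finset ι) (g : ι → Fin k → S) :
    (M.updateCol j (fun r => ∑ i ∈ s, g i r)).det
      = ∑ i ∈ s, (M.updateCol j (g i)).det := by
  classical
  induction s using Finset.induction_on with
  | empty =>
    rw [Finset.sum_empty]
    have h0 : (fun _ : Fin k => (0 : S)) = (0 : S) • (fun _ : Fin k => (1 : S)) := by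
      funext r; simp
    simp only [Finset.sum_empty]
    rw [h0, Matrix.det_updateCol_smul, zero_mul]
  | @insert a s ha ih =>
    have h1 : (fun r => ∑ i ∈ insert a s, g i r)
        = fun r => g a r + ∑ i ∈ s, g i r := by
      funext r; rw [Finset.sum_insert ha]
    rw [h1, Finset.sum_insert ha, ← ih]
    exact Matrix.det_updateCol_add M j (g a) _

lemma det_single_last_col {k : ℕ} (A : Matrix (Fin (k + 1)) (Fin (k + 1)) S)
    (hcol : ∀ i, A i (Fin.last k) = if i = Fin.last k then 1 else 0) :
    A.det = Matrix.det (fun i j : Fin k => A (Fin.castSucc i) (Fin.castSucc j)) := by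
  rw [Matrix.det_succ_column A (Fin.last k)]
  rw [Finset.sum_eq_single (Fin.last k)]
  · have hsign : (-1 : S) ^ ((Fin.last k : ℕ) + (Fin.last k : ℕ)) = 1 := by
      rw [← two_mul, pow_mul]
      norm_num
    rw [hcol, if_pos rfl, mul_one, hsign, one_mul, Fin.succAbove_last]
    rfl
  · intro i _ hi
    rw [hcol, if_neg hi, mul_zero, zero_mul]
  · intro h; exact absurd (Finset.mem_univ _) h

lemma det_expand {k : ℕ} (M : Matrix (Fin (k + 1)) (Fin (k + 1)) S) :
    M.det = ∑ b : Fin (k + 1), (if b = Fin.last k then 1 else -1) *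
      (M b (Fin.last k) *
        Matrix.det (fun i j : Fin k =>
          (M.updateRow b (M (Fin.last k))) (Fin.castSucc i) (Fin.castSucc j))) := by
  classical
  have hcoldecomp : (fun r => M r (Fin.last k))
      = fun r => ∑ b : Fin (k + 1), M b (Fin.last k) * (if r = b then 1 else 0) := by
    funext r
    rw [Finset.sum_eq_single r]
    · rw [if_pos rfl, mul_one]
    · intro b _ hb
      rw [if_neg (Ne.symm hb), mul_zero]
    · intro h; exact absurd (Finset.mem_univ _) h
  have h0 : M.det = (M.updateCol (Fin.last k) (fun r => M r (Fin.last k))).det := by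
    rw [Matrix.updateCol_eq_self]
  rw [h0, hcoldecomp, det_updateColumn_sum']
  refine Finset.sum_congr rfl fun b _ => ?_
  have hsmul : (fun r => M b (Fin.last k) * (if r = b then 1 else 0))
      = (M b (Fin.last k)) • (fun r => if r = b then (1 : S) else 0) := by
    funext r; simp
  rw [hsmul, Matrix.det_updateCol_smul]
  have hkey : (M.updateCol (Fin.last k) (fun r => if r = b then (1:S) else 0)).det
      = (if b = Fin.last k then (1:S) else -1) *
        Matrix.det (fun i j : Fin k =>
          (M.updateRow b (M (Fin.last k))) (Fin.castSucc i) (Fin.castSucc j)) := by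
    by_cases hb : b = Fin.last k
    · subst hb
      rw [if_pos rfl, one_mul]
      rw [det_single_last_col (M.updateCol (Fin.last k)
          (fun r => if r = Fin.last k then (1:S) else 0))
          (fun i => Matrix.updateCol_self ..)]
      congr 1
      funext i j
      rw [Matrix.updateCol_ne (Fin.castSucc_lt_last j).ne, Matrix.updateRow_eq_self]
    · rw [if_neg hb, neg_one_mul]
      set N := M.updateCol (Fin.last k) (fun r => if r = b then (1:S) else 0) with hN
      have hperm : (N.submatrix (Equiv.swap b (Fin.last k)) id).det
          = Equiv.Perm.sign (Equiv.swap b (Fin.last k)) * N.det :=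
        Matrix.det_permute _ N
      rw [Equiv.Perm.sign_swap hb] at hperm
      have hNdet : N.det = - (N.submatrix (Equiv.swap b (Fin.last k)) id).det := by
        rw [hperm]; simp
      rw [hNdet]
      congr 1
      have hcol2 : ∀ i, (N.submatrix (Equiv.swap b (Fin.last k)) id) i (Fin.last k)
          = if i = Fin.last k then 1 else 0 := by
        intro i
        simp only [Matrix.submatrix_apply, id_eq, hN, Matrix.updateCol_self]
        by_cases h : i = Fin.last k
        · simp [h, Equiv.swap_apply_right]
        · rw [if_neg h]
          have : Equiv.swap b (Fin.last k) i ≠ b := by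
            intro hh
            have := (Equiv.swap b (Fin.last k)).injective
              (hh.trans (Equiv.swap_apply_right b (Fin.last k)).symm)
            exact h this
          rw [if_neg this]
      rw [det_single_last_col _ hcol2]
      congr 1
      funext i j
      simp only [Matrix.submatrix_apply, id_eq, hN]
      rw [Matrix.updateCol_ne (Fin.castSucc_lt_last j).ne]
      by_cases h : Fin.castSucc i = b
      · rw [h, Equiv.swap_apply_left, Matrix.updateRow_apply, if_pos rfl]
      · have h2 : Equiv.swap b (Fin.last k) (Fin.castSucc i) = Fin.castSucc i :=
          Equiv.swap_apply_of_ne_of_ne h (Fin.castSucc_lt_last i).ne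
        rw [h2, Matrix.updateRow_apply, if_neg h]
  rw [hkey]
  ring

end LEM


lemma diamond (k : ℕ) (hk1 : k + 1 ≤ n) (t : Equiv.Perm (Fin n)) :
    ∑ b : Fin (k + 1), (if b = Fin.last k then (1 : Rn n) else -1) *
        (adjugate (Xmat1 n) (t (Fin.castLE hk1 b)) ⟨k, hk1⟩ *
          (Ymat n k (t * Equiv.swap ⟨k, hk1⟩ (Fin.castLE hk1 b))).det)
      = (Xmat1 n).det * (Ymat n (k + 1) t).det := by
  have hkk : k < n := hk1
  set a : Fin n := ⟨k, hk1⟩ with ha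
  rcases Nat.eq_zero_or_pos k with hk0 | hkpos
  · subst hk0
    rw [Fin.sum_univ_one]
    have hb0 : (0 : Fin 1) = Fin.last 0 := rfl
    rw [if_pos hb0, one_mul]
    have hcb : Fin.castLE hk1 (0 : Fin 1) = a := rfl
    rw [hcb, Equiv.swap_self, ← Equiv.Perm.one_def, mul_one]
    have hY1 : Ymat n 1 t = (Ymat n 0 t).updateRow a (Pi.single (t a) 1) :=
      (Ymat_update 0 hkk t).symm
    rw [hY1, Ymat_zero, ← adjugate_apply]
    ring
  · have hk : k ≤ n := le_of_lt hkk
    set M := Amat n (k + 1) hk1 t with hM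
    have hMlast : ∀ b : Fin (k + 1), M b (Fin.last k)
        = adjugate (Xmat1 n) (t (Fin.castLE hk1 b)) a := by
      intro b
      have : Fin.castLE hk1 (Fin.last k) = a := Fin.ext rfl
      rw [hM]
      show adjugate (Xmat1 n) (t (Fin.castLE hk1 b)) (Fin.castLE hk1 (Fin.last k)) = _
      rw [this]
    have htop : ∀ b : Fin (k + 1),
        (fun i j : Fin k => (M.updateRow b (M (Fin.last k))) (Fin.castSucc i) (Fin.castSucc j))
          = Amat n k hk (t * Equiv.swap a (Fin.castLE hk1 b)) := by
      intro b
      funext i j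
      have hcast : Fin.castLE hk1 (Fin.castSucc j) = Fin.castLE hk j := Fin.ext rfl
      rw [Matrix.updateRow_apply]
      by_cases h : Fin.castSucc i = b
      · rw [if_pos h]
        have hlast : Fin.castLE hk1 (Fin.last k) = a := Fin.ext rfl
        show adjugate (Xmat1 n) (t (Fin.castLE hk1 (Fin.last k))) (Fin.castLE hk1 (Fin.castSucc j)) = _
        rw [hlast, hcast]
        have hib : Fin.castLE hk i = Fin.castLE hk1 b := Fin.ext (by
          have := congrArg Fin.val h
          simpa using this)
        show _ = adjugate (Xmat1 n) ((t * Equiv.swap a (Fin.castLE hk1 b)) (Fin.castLE hk i)) (Fin.castLE hk j)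
        rw [Equiv.Perm.mul_apply, hib, Equiv.swap_apply_right]
      · rw [if_neg h]
        show adjugate (Xmat1 n) (t (Fin.castLE hk1 (Fin.castSucc i))) (Fin.castLE hk1 (Fin.castSucc j)) = _
        have hcast2 : Fin.castLE hk1 (Fin.castSucc i) = Fin.castLE hk i := Fin.ext rfl
        rw [hcast2, hcast]
        show _ = adjugate (Xmat1 n) ((t * Equiv.swap a (Fin.castLE hk1 b)) (Fin.castLE hk i)) (Fin.castLE hk j)
        have h1 : Fin.castLE hk i ≠ a := by
          intro hh
          have := congrArg Fin.val hh
          simp only [Fin.coe_castLE] at this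
          exact absurd this (Nat.ne_of_lt i.isLt)
        have h2 : Fin.castLE hk i ≠ Fin.castLE hk1 b := by
          intro hh
          exact h (Fin.ext (by simpa using congrArg Fin.val hh))
        rw [Equiv.Perm.mul_apply, Equiv.swap_apply_of_ne_of_ne h1 h2]
    have hJ1 : M.det = (Xmat1 n).det ^ k * (Ymat n (k + 1) t).det := by
      have := Jlem (k + 1) hk1 (Nat.succ_le_succ (Nat.zero_le k)) t
      simpa using this
    have hJ2 : ∀ b : Fin (k + 1),
        (Amat n k hk (t * Equiv.swap a (Fin.castLE hk1 b))).det
          = (Xmat1 n).det ^ (k - 1) * (Ymat n k (t * Equiv.swap a (Fin.castLE hk1 b))).det :=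
      fun b => Jlem k hk hkpos _
    have hexp := det_expand M
    rw [hJ1] at hexp
    have key : (Xmat1 n).det ^ (k - 1) *
        (∑ b : Fin (k + 1), (if b = Fin.last k then (1 : Rn n) else -1) *
          (adjugate (Xmat1 n) (t (Fin.castLE hk1 b)) a *
            (Ymat n k (t * Equiv.swap a (Fin.castLE hk1 b))).det))
        = (Xmat1 n).det ^ (k - 1) * ((Xmat1 n).det * (Ymat n (k + 1) t).det) := by
      rw [Finset.mul_sum]
      have hs : ∀ b : Fin (k + 1), (Xmat1 n).det ^ (k - 1) *
          ((if b = Fin.last k then (1 : Rn n) else -1) *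
            (adjugate (Xmat1 n) (t (Fin.castLE hk1 b)) a *
              (Ymat n k (t * Equiv.swap a (Fin.castLE hk1 b))).det))
          = (if b = Fin.last k then (1 : Rn n) else -1) *
            (M b (Fin.last k) *
              Matrix.det (fun i j : Fin k =>
                (M.updateRow b (M (Fin.last k))) (Fin.castSucc i) (Fin.castSucc j))) := by
        intro b
        rw [htop b, hJ2 b, hMlast b]
        ring
      rw [Finset.sum_congr rfl (fun b _ => hs b), ← det_expand M, hJ1]
      have hpow : (Xmat1 n).det ^ k = (Xmat1 n).det ^ (k - 1) * (Xmat1 n).det := by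
        rw [← pow_succ]; congr 1; omega
      rw [hpow]; ring
    exact mul_left_cancel₀ (pow_ne_zero _ det_Xmat_ne_zero) key


noncomputable def partialD (n : ℕ) : ℕ → Equiv.Perm (Fin n) → Module.End ℚ (Rn n)
  | 0, _ => 1
  | k + 1, σ => if h : k < n then pd1 (⟨k, h⟩, σ ⟨k, h⟩) * partialD n k σ else partialD n k σ

lemma partialD_succ (k : ℕ) (h : k < n) (σ : Equiv.Perm (Fin n)) :
    partialD n (k + 1) σ = pd1 (⟨k, h⟩, σ ⟨k, h⟩) * partialD n k σ := dif_pos h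

lemma partialD_succ_of_ge (k : ℕ) (h : ¬ k < n) (σ : Equiv.Perm (Fin n)) :
    partialD n (k + 1) σ = partialD n k σ := dif_neg h

lemma pd1_comm (u v : Fin n × Fin n) : pd1 u * pd1 v = pd1 v * pd1 u := by
  apply LinearMap.ext
  intro p
  exact pderiv_pderiv u v p

lemma partialD_comm_pd1 (k : ℕ) (σ : Equiv.Perm (Fin n)) (u : Fin n × Fin n) :
    partialD n k σ * pd1 u = pd1 u * partialD n k σ := by
  induction k with
  | zero => show (1 : Module.End ℚ (Rn n)) * _ = _ * 1; rw [one_mul, mul_one]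
  | succ k ih =>
    by_cases h : k < n
    · rw [partialD_succ k h, mul_assoc, ih, ← mul_assoc, pd1_comm, mul_assoc]
    · rw [partialD_succ_of_ge k h, ih]

lemma partialD_congr (k : ℕ) (σ τ : Equiv.Perm (Fin n))
    (h : ∀ i : Fin n, (i : ℕ) < k → σ i = τ i) : partialD n k σ = partialD n k τ := by
  induction k with
  | zero => rfl
  | succ k ih =>
    have hik : ∀ i : Fin n, (i : ℕ) < k → σ i = τ i := fun i hi => h i (Nat.lt_succ_of_lt hi)
    by_cases hkn : k < n
    · rw [partialD_succ k hkn, partialD_succ k hkn, h ⟨k, hkn⟩ (Nat.lt_succ_self k), ih hik]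
    · rw [partialD_succ_of_ge k hkn, partialD_succ_of_ge k hkn, ih hik]

lemma listProd_eq_partialD (σ : Equiv.Perm (Fin n)) :
    (List.ofFn fun i : Fin n => pd1 (i, σ i)).prod = partialD n n σ := by
  suffices h : ∀ m (hm : m ≤ n),
      (List.ofFn fun i : Fin m =>
        pd1 ((Fin.castLE hm i), σ (Fin.castLE hm i))).prod = partialD n m σ by
    have h2 := h n le_rfl
    have h3 : (fun i : Fin n => pd1 ((Fin.castLE le_rfl i), σ (Fin.castLE le_rfl i)))
        = fun i : Fin n => pd1 (i, σ i) := by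
      funext i
      have : Fin.castLE le_rfl i = i := Fin.ext rfl
      rw [this]
    rwa [h3] at h2
  intro m
  induction m with
  | zero => intro hm; simp [partialD]
  | succ m ih =>
    intro hm
    have hmn : m < n := hm
    rw [List.ofFn_succ', List.prod_concat]
    have h3 : (fun i : Fin m => pd1 ((Fin.castLE hm (Fin.castSucc i)),
        σ (Fin.castLE hm (Fin.castSucc i))))
        = fun i : Fin m => pd1 ((Fin.castLE (le_of_lt hmn) i), σ (Fin.castLE (le_of_lt hmn) i)) := by
      funext i
      have : Fin.castLE hm (Fin.castSucc i) = Fin.castLE (le_of_lt hmn) i := Fin.ext rfl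
      rw [this]
    show ((List.ofFn fun i : Fin m => pd1 ((Fin.castLE hm (Fin.castSucc i)),
        σ (Fin.castLE hm (Fin.castSucc i)))).prod) * _ = _
    rw [h3, ih (le_of_lt hmn)]
    have hlast : Fin.castLE hm (Fin.last m) = ⟨m, hmn⟩ := Fin.ext rfl
    rw [hlast, partialD_comm_pd1, partialD_succ m hmn]

def Pset (n k : ℕ) (t : Equiv.Perm (Fin n)) : Finset (Equiv.Perm (Fin n)) :=
  Finset.univ.filter (fun σ => ∀ i : Fin n, k ≤ (i : ℕ) → σ i = t i)

lemma mem_Pset {k : ℕ} {t σ : Equiv.Perm (Fin n)} :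
    σ ∈ Pset n k t ↔ ∀ i : Fin n, k ≤ (i : ℕ) → σ i = t i := by
  simp [Pset]

lemma Pset_zero (t : Equiv.Perm (Fin n)) : Pset n 0 t = {t} := by
  ext σ
  rw [mem_Pset, Finset.mem_singleton]
  constructor
  · intro h; exact Equiv.ext fun i => h i (Nat.zero_le _)
  · intro h; subst h; intro i _; rfl

lemma Pset_univ (t : Equiv.Perm (Fin n)) : Pset n n t = Finset.univ := by
  ext σ
  simp only [Finset.mem_univ, iff_true, mem_Pset]
  intro i hi
  exact absurd i.isLt (by omega)


lemma Glem (m : ℕ) : ∀ k, k ≤ n → ∀ t : Equiv.Perm (Fin n),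
    ∑ σ ∈ Pset n k t, C (((Equiv.Perm.sign (σ * t⁻¹) : ℤ) : ℚ)) *
        (partialD n k σ) ((Xmat1 n).det ^ (m + 1))
      = C (∏ j ∈ Finset.range k, ((m : ℚ) + j + 1)) *
        ((Xmat1 n).det ^ m * (Ymat n k t).det) := by
  intro k
  induction k with
  | zero =>
    intro _ t
    rw [Pset_zero, Finset.sum_singleton]
    simp only [mul_inv_cancel, Equiv.Perm.sign_one, Units.val_one, Int.cast_one, _root_.map_one,
      one_mul, Finset.range_zero, Finset.prod_empty]
    rw [Ymat_zero]
    show (Xmat1 n).det ^ (m + 1) = (Xmat1 n).det ^ m * (Xmat1 n).det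
    rw [pow_succ]
  | succ k ih =>
    intro hk1 t
    have hkk : k < n := hk1
    have hk : k ≤ n := le_of_lt hkk
    set a : Fin n := ⟨k, hk1⟩ with ha
    have hpart : Pset n (k + 1) t = Finset.univ.biUnion
        (fun b : Fin (k + 1) => Pset n k (t * Equiv.swap a (Fin.castLE hk1 b))) := by
      ext σ
      simp only [Finset.mem_biUnion, Finset.mem_univ, true_and]
      constructor
      · intro hσ
        rw [mem_Pset] at hσ
        have hb0 : ((t⁻¹ (σ a) : Fin n) : ℕ) < k + 1 := by
          by_contra hcon
          push_neg at hcon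
          have h1 : σ (t⁻¹ (σ a)) = t (t⁻¹ (σ a)) := hσ _ hcon
          rw [Equiv.Perm.inv_def, Equiv.apply_symm_apply] at h1
          have h2 : t⁻¹ (σ a) = a := σ.injective h1
          rw [h2] at hcon
          simp only [ha] at hcon
          omega
        refine ⟨⟨(t⁻¹ (σ a) : ℕ), hb0⟩, ?_⟩
        rw [mem_Pset]
        have hcb : Fin.castLE hk1 (⟨((t⁻¹ (σ a) : Fin n) : ℕ), hb0⟩ : Fin (k + 1))
            = t⁻¹ (σ a) := Fin.ext rfl
        rw [hcb]
        intro i hi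
        rcases Nat.eq_or_lt_of_le hi with hik | hik
        · have hia : i = a := Fin.ext hik.symm
          subst hia
          rw [Equiv.Perm.mul_apply, Equiv.swap_apply_left, Equiv.Perm.inv_def, Equiv.apply_symm_apply]
        · have hia : i ≠ a := fun h => by rw [h] at hik; simp only [ha] at hik; omega
          have hib : i ≠ t⁻¹ (σ a) := fun h => by rw [h] at hik; omega
          rw [Equiv.Perm.mul_apply, Equiv.swap_apply_of_ne_of_ne hia hib]
          exact hσ i (by omega)
      · rintro ⟨b, hb⟩
        rw [mem_Pset] at hb ⊢
        intro i hi
        have hia : i ≠ a := fun h => by rw [h] at hi; simp only [ha] at hi; omega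
        have hib : i ≠ Fin.castLE hk1 b := fun h => by
          rw [h] at hi
          have := b.isLt
          simp only [Fin.coe_castLE] at hi
          omega
        have := hb i (by omega)
        rwa [Equiv.Perm.mul_apply, Equiv.swap_apply_of_ne_of_ne hia hib] at this
    have hdisj : ((Finset.univ : Finset (Fin (k + 1))) : Set (Fin (k + 1))).PairwiseDisjoint
        (fun b : Fin (k + 1) => Pset n k (t * Equiv.swap a (Fin.castLE hk1 b))) := by
      intro b1 _ b2 _ hne
      simp only [Function.onFun]
      rw [Finset.disjoint_left]
      intro σ h1 h2
      rw [mem_Pset] at h1 h2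
      have e1 : σ a = t (Fin.castLE hk1 b1) := by
        have := h1 a (le_refl k)
        rwa [Equiv.Perm.mul_apply, Equiv.swap_apply_left] at this
      have e2 : σ a = t (Fin.castLE hk1 b2) := by
        have := h2 a (le_refl k)
        rwa [Equiv.Perm.mul_apply, Equiv.swap_apply_left] at this
      have : Fin.castLE hk1 b1 = Fin.castLE hk1 b2 := t.injective (e1 ▸ e2)
      exact hne (Fin.ext (by simpa using congrArg Fin.val this))
    rw [hpart, Finset.sum_biUnion hdisj]
    -- inner sums
    have hCeps : ∀ b : Fin (k + 1), C (if b = Fin.last k then (1 : ℚ) else -1)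
        = (if b = Fin.last k then (1 : Rn n) else -1) := by
      intro b; by_cases h : b = Fin.last k <;> simp [h]
    have hsigneps : ∀ b : Fin (k + 1),
        ((Equiv.Perm.sign ((t * Equiv.swap a (Fin.castLE hk1 b)) * t⁻¹) : ℤ) : ℚ)
          = (if b = Fin.last k then (1 : ℚ) else -1) := by
      intro b
      have h1 : (t * Equiv.swap a (Fin.castLE hk1 b)) * t⁻¹
          = t * (Equiv.swap a (Fin.castLE hk1 b) * t⁻¹) := by group
      have h2 : Equiv.Perm.sign ((t * Equiv.swap a (Fin.castLE hk1 b)) * t⁻¹)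
          = Equiv.Perm.sign (Equiv.swap a (Fin.castLE hk1 b)) := by
        rw [h1, Equiv.Perm.sign_mul, Equiv.Perm.sign_mul, Equiv.Perm.sign_inv,
          mul_comm (Equiv.Perm.sign (Equiv.swap a (Fin.castLE hk1 b))) (Equiv.Perm.sign t),
          ← mul_assoc, Int.units_mul_self, one_mul]
      rw [h2, Equiv.Perm.sign_swap']
      by_cases h : b = Fin.last k
      · have : a = Fin.castLE hk1 b := by
          subst h; exact Fin.ext rfl
        rw [if_pos this, if_pos h]
        simp
      · have : a ≠ Fin.castLE hk1 b := by
          intro hh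
          have := congrArg Fin.val hh
          simp only [ha, Fin.coe_castLE] at this
          exact h (Fin.ext this.symm)
        rw [if_neg this, if_neg h]
        simp
    have hinner : ∀ b : Fin (k + 1),
        ∑ σ ∈ Pset n k (t * Equiv.swap a (Fin.castLE hk1 b)),
            C (((Equiv.Perm.sign (σ * t⁻¹) : ℤ) : ℚ)) *
              (partialD n (k + 1) σ) ((Xmat1 n).det ^ (m + 1))
        = C (if b = Fin.last k then (1 : ℚ) else -1) *
            (C (∏ j ∈ Finset.range k, ((m : ℚ) + j + 1)) *
              pderiv (a, t (Fin.castLE hk1 b))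
                ((Xmat1 n).det ^ m *
                  (Ymat n k (t * Equiv.swap a (Fin.castLE hk1 b))).det)) := by
      intro b
      set c : Fin n := Fin.castLE hk1 b with hc
      set tb : Equiv.Perm (Fin n) := t * Equiv.swap a c with htb
      have hterm : ∀ σ ∈ Pset n k tb,
          C (((Equiv.Perm.sign (σ * t⁻¹) : ℤ) : ℚ)) *
              (partialD n (k + 1) σ) ((Xmat1 n).det ^ (m + 1))
          = C (if b = Fin.last k then (1 : ℚ) else -1) *
              (pd1 (a, t c) (C (((Equiv.Perm.sign (σ * tb⁻¹) : ℤ) : ℚ)) *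
                (partialD n k σ) ((Xmat1 n).det ^ (m + 1)))) := by
        intro σ hσ
        have hσa : σ a = t c := by
          have := (mem_Pset.mp hσ) a (le_refl k)
          rwa [Equiv.Perm.mul_apply, Equiv.swap_apply_left] at this
        have hP : (partialD n (k + 1) σ) ((Xmat1 n).det ^ (m + 1))
            = pd1 (a, t c) ((partialD n k σ) ((Xmat1 n).det ^ (m + 1))) := by
          rw [partialD_succ k hkk σ]
          have : (⟨k, hkk⟩ : Fin n) = a := rfl
          rw [this, hσa]
          rfl
        rw [hP]
        have hsgn : ((Equiv.Perm.sign (σ * t⁻¹) : ℤ) : ℚ)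
            = (if b = Fin.last k then (1 : ℚ) else -1) *
              ((Equiv.Perm.sign (σ * tb⁻¹) : ℤ) : ℚ) := by
          have hgrp : σ * t⁻¹ = (σ * tb⁻¹) * (tb * t⁻¹) := by group
          have hsigneps' := hsigneps b
          rw [← hc, ← htb] at hsigneps'
          rw [hgrp, Equiv.Perm.sign_mul]
          simp only [Units.val_mul, Int.cast_mul]
          rw [hsigneps']
          ring
        rw [hsgn]
        have hpdC : pd1 (a, t c) (C (((Equiv.Perm.sign (σ * tb⁻¹) : ℤ) : ℚ)) *
            (partialD n k σ) ((Xmat1 n).det ^ (m + 1)))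
            = C (((Equiv.Perm.sign (σ * tb⁻¹) : ℤ) : ℚ)) *
              pd1 (a, t c) ((partialD n k σ) ((Xmat1 n).det ^ (m + 1))) := by
          show pderiv (a, t c) _ = _
          rw [pderiv_C_mul]
          rfl
        rw [hpdC, _root_.map_mul]
        ring
      rw [Finset.sum_congr rfl hterm, ← Finset.mul_sum]
      congr 1
      rw [← map_sum (pd1 (a, t c))]
      rw [ih hk tb]
      show pderiv (a, t c) _ = _
      rw [pderiv_C_mul]
    rw [Finset.sum_congr rfl (fun b _ => hinner b)]
    -- now compute the pderiv and assemble
    have hpd : ∀ b : Fin (k + 1),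
        pderiv (a, t (Fin.castLE hk1 b))
            ((Xmat1 n).det ^ m * (Ymat n k (t * Equiv.swap a (Fin.castLE hk1 b))).det)
        = (m : Rn n) * (Xmat1 n).det ^ (m - 1) *
            (adjugate (Xmat1 n) (t (Fin.castLE hk1 b)) a) *
            (Ymat n k (t * Equiv.swap a (Fin.castLE hk1 b))).det
          + (Xmat1 n).det ^ m *
              (Ymat n (k + 1) (t * Equiv.swap a (Fin.castLE hk1 b))).det := by
      intro b
      set c : Fin n := Fin.castLE hk1 b with hc
      set tb : Equiv.Perm (Fin n) := t * Equiv.swap a c with htb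
      rw [pderiv_mul, pderiv_pow]
      have hpdf : pderiv (a, t c) (Xmat1 n).det = adjugate (Xmat1 n) (t c) a := by
        rw [pderiv_det (Xmat1 n) a (t c) (fun j => rfl)
          (fun i j hia => pderiv_X_of_ne (fun h => hia (congrArg Prod.fst h)))]
        rw [adjugate_apply]
      have hpdY : pderiv (a, t c) (Ymat n k tb).det = (Ymat n (k + 1) tb).det := by
        have hrow : ∀ j, Ymat n k tb a j = X (a, j) := by
          intro j
          simp only [Ymat, ha]
          rw [if_neg (by omega)]
        have hoth : ∀ i j, i ≠ a → pderiv (a, t c) (Ymat n k tb i j) = 0 := by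
          intro i j hia
          simp only [Ymat]
          by_cases hik : (i : ℕ) < k
          · rw [if_pos hik]
            by_cases hj : j = tb i
            · rw [if_pos hj]; exact pderiv_one
            · rw [if_neg hj]; exact map_zero _
          · rw [if_neg hik]
            exact pderiv_X_of_ne (fun h => hia (congrArg Prod.fst h))
        rw [pderiv_det (Ymat n k tb) a (t c) hrow hoth]
        have htc : t c = tb a := by
          rw [htb, Equiv.Perm.mul_apply, Equiv.swap_apply_left]
        rw [htc]
        have := Ymat_update k hkk tb
        have haeq : (⟨k, hkk⟩ : Fin n) = a := rfl
        rw [haeq] at this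
        rw [this]
      rw [hpdf, hpdY]
    rw [Finset.sum_congr rfl (fun b _ => by rw [hpd b])]
    -- split the sums
    have hsplit : ∀ b : Fin (k + 1),
        C (if b = Fin.last k then (1 : ℚ) else -1) *
          (C (∏ j ∈ Finset.range k, ((m : ℚ) + j + 1)) *
            ((m : Rn n) * (Xmat1 n).det ^ (m - 1) *
              (adjugate (Xmat1 n) (t (Fin.castLE hk1 b)) a) *
              (Ymat n k (t * Equiv.swap a (Fin.castLE hk1 b))).det
            + (Xmat1 n).det ^ m *
                (Ymat n (k + 1) (t * Equiv.swap a (Fin.castLE hk1 b))).det))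
        = C (∏ j ∈ Finset.range k, ((m : ℚ) + j + 1)) *
            ((m : Rn n) * (Xmat1 n).det ^ (m - 1) *
              ((if b = Fin.last k then (1 : Rn n) else -1) *
                (adjugate (Xmat1 n) (t (Fin.castLE hk1 b)) a *
                  (Ymat n k (t * Equiv.swap a (Fin.castLE hk1 b))).det)))
          + C (∏ j ∈ Finset.range k, ((m : ℚ) + j + 1)) *
              ((Xmat1 n).det ^ m *
                ((if b = Fin.last k then (1 : Rn n) else -1) *
                  (Ymat n (k + 1) (t * Equiv.swap a (Fin.castLE hk1 b))).det)) := by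
      intro b
      rw [hCeps b]
      ring
    rw [Finset.sum_congr rfl (fun b _ => hsplit b), Finset.sum_add_distrib,
      ← Finset.mul_sum, ← Finset.mul_sum, ← Finset.mul_sum]
    -- second sum: row-swap determinants
    have hT2 : ∀ b : Fin (k + 1),
        (if b = Fin.last k then (1 : Rn n) else -1) *
          (Ymat n (k + 1) (t * Equiv.swap a (Fin.castLE hk1 b))).det
        = (Ymat n (k + 1) t).det := by
      intro b
      have hsw : Ymat n (k + 1) (t * Equiv.swap a (Fin.castLE hk1 b))
          = (Ymat n (k + 1) t).submatrix (Equiv.swap a (Fin.castLE hk1 b)) id :=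
        Ymat_swap (k + 1) t a (Fin.castLE hk1 b) (by simp [ha]) (by simp; exact Nat.lt_succ_iff.mp b.isLt)
      rw [hsw, Matrix.det_permute, Equiv.Perm.sign_swap']
      by_cases h : b = Fin.last k
      · have hac : a = Fin.castLE hk1 b := by subst h; exact Fin.ext rfl
        rw [if_pos h, if_pos hac]
        simp
      · have hac : a ≠ Fin.castLE hk1 b := by
          intro hh
          have := congrArg Fin.val hh
          simp only [ha, Fin.coe_castLE] at this
          exact h (Fin.ext this.symm)
        rw [if_neg h, if_neg hac]
        simp
    have hsum2 : ∑ b : Fin (k + 1),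
        (Xmat1 n).det ^ m *
          ((if b = Fin.last k then (1 : Rn n) else -1) *
            (Ymat n (k + 1) (t * Equiv.swap a (Fin.castLE hk1 b))).det)
        = ((k : Rn n) + 1) * ((Xmat1 n).det ^ m * (Ymat n (k + 1) t).det) := by
      rw [Finset.sum_congr rfl (fun b _ => by rw [hT2 b])]
      rw [Finset.sum_const, Finset.card_univ, Fintype.card_fin, nsmul_eq_mul]
      push_cast
      ring
    rw [hsum2, diamond k hk1 t]
    have hmf : (m : Rn n) * (Xmat1 n).det ^ (m - 1) *
        ((Xmat1 n).det * (Ymat n (k + 1) t).det)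
        = (m : Rn n) * ((Xmat1 n).det ^ m * (Ymat n (k + 1) t).det) := by
      rcases Nat.eq_zero_or_pos m with hm | hm
      · subst hm; simp
      · rw [show (Xmat1 n).det ^ m = (Xmat1 n).det ^ (m - 1) * (Xmat1 n).det from by
          rw [← pow_succ]; congr 1; omega]
        ring
    rw [hmf]
    rw [Finset.prod_range_succ]
    have hC : C ((∏ j ∈ Finset.range k, ((m : ℚ) + j + 1)) * ((m : ℚ) + k + 1))
        = C (∏ j ∈ Finset.range k, ((m : ℚ) + j + 1)) * ((m : Rn n) + (k : Rn n) + 1) := by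
      rw [_root_.map_mul]
      congr 1
      simp only [_root_.map_add, map_natCast, _root_.map_one]
    rw [hC]
    ring

lemma main_step (m : ℕ) :
    (detOp1 n) ((Xmat1 n).det ^ (m + 1))
      = C (∏ j ∈ Finset.range n, ((m : ℚ) + j + 1)) * (Xmat1 n).det ^ m := by
  have hG := Glem m n le_rfl 1
  rw [Pset_univ, Ymat_univ_one, Matrix.det_one, mul_one] at hG
  rw [detOp1, LinearMap.sum_apply]
  have hterm : ∀ σ : Equiv.Perm (Fin n),
      ((Equiv.Perm.sign σ : ℤ) • (List.ofFn fun i => pd1 (i, σ i)).prod)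
          ((Xmat1 n).det ^ (m + 1))
      = C (((Equiv.Perm.sign (σ * (1 : Equiv.Perm (Fin n))⁻¹) : ℤ) : ℚ)) *
          (partialD n n σ) ((Xmat1 n).det ^ (m + 1)) := by
    intro σ
    rw [LinearMap.smul_apply, listProd_eq_partialD σ, inv_one, mul_one, zsmul_eq_mul]
    congr 1
  rw [Finset.sum_congr rfl (fun σ _ => hterm σ)]
  exact hG

lemma iterate_step (c : ℕ) : ∀ N : ℕ, (detOp1 n ^ c) ((Xmat1 n).det ^ (N + c))
    = C (∏ j ∈ Finset.range c, ∏ i ∈ Finset.range n, ((N : ℚ) + j + i + 1)) *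
        (Xmat1 n).det ^ N := by
  induction c with
  | zero =>
    intro N
    simp
  | succ c ih =>
    intro N
    rw [pow_succ, Module.End.mul_apply]
    have h1 : (detOp1 n) ((Xmat1 n).det ^ (N + (c + 1)))
        = C (∏ i ∈ Finset.range n, (((N + c : ℕ) : ℚ) + i + 1)) * (Xmat1 n).det ^ (N + c) := by
      have := main_step (n := n) (N + c)
      rw [show N + (c + 1) = (N + c) + 1 from by omega]
      exact this
    rw [h1, ← smul_eq_C_mul, _root_.map_smul, ih N, smul_eq_C_mul, ← mul_assoc, ← _root_.map_mul]
    congr 2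
    rw [Finset.prod_range_succ]
    rw [mul_comm]
    congr 1
    refine Finset.prod_congr rfl fun i _ => ?_
    push_cast
    ring

end CayleyPow


/-- Power of the Cayley identity:
`det(∂X)^d·(det X)^{d(s+1)} = (∏_{i=1}^{n} ∏_{j=0}^{d-1} (d·s+i+j))·(det X)^{d·s}`. -/
theorem cayley_identity_pow (n d : ℕ) (hn : 0 < n) (hd : 0 < d) (s : ℕ) :
    (detOp1 n ^ d) ((Xmat1 n).det ^ (d * (s + 1))) =
      (∏ i ∈ Finset.Icc 1 n, ∏ j ∈ Finset.range d, ((d : ℚ) * s + i + j)) •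
        (Xmat1 n).det ^ (d * s) := by
  have h1 : d * (s + 1) = d * s + d := by ring
  rw [h1, CayleyPow.iterate_step d (d * s), smul_eq_C_mul]
  congr 2
  rw [Finset.prod_comm]
  have hIcc : ∏ i ∈ Finset.Icc 1 n, ∏ j ∈ Finset.range d, ((d : ℚ) * s + i + j)
      = ∏ i ∈ Finset.range n, ∏ j ∈ Finset.range d, ((d : ℚ) * s + ((1 + i : ℕ) : ℚ) + j) := by
    rw [← Finset.Ico_add_one_right_eq_Icc, Finset.prod_Ico_eq_prod_range, Nat.add_sub_cancel]
  rw [hIcc]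
  refine Finset.prod_congr rfl fun i _ => Finset.prod_congr rfl fun j _ => ?_
  push_cast
  ring
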